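/- The function ν(u,v) = 8√3·c²/(2 + √3·c²(u²+v²))², where c > 0 is a constant, satisfies the Ganchev equation Δ(ln ν) + 2ν = 0 on ℝ². -/

import Mathlib

/-- Euclidean Laplacian of a function of two real variables. -/
noncomputable def lap2 (f : ℝ → ℝ → ℝ) (u v : ℝ) : ℝ :=
  deriv (fun s => deriv (fun r => f r v) s) u +
    deriv (fun s => deriv (fun r => f u r) s) v

/-- the function `ν(u,v) = 8√3·c²/(2 + √3·c²(u²+v²))²` with `c > 0`
satisfies the Ganchev equation `Δ(ln ν) + 2ν = 0` on all of `ℝ²`. -/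
theorem ganchev_solution (c : ℝ) (hc : 0 < c) :
    ∀ u v : ℝ,
      let ν : ℝ → ℝ → ℝ := fun u v =>
        8 * Real.sqrt 3 * c ^ 2 / (2 + Real.sqrt 3 * c ^ 2 * (u ^ 2 + v ^ 2)) ^ 2
      lap2 (fun a b => Real.log (ν a b)) u v + 2 * ν u v = 0 := by
  intro u v ν
  have h3 : (0:ℝ) < Real.sqrt 3 := Real.sqrt_pos.2 (by norm_num)
  have hkpos : 0 < Real.sqrt 3 * c ^ 2 := mul_pos h3 (pow_pos hc 2)
  set k := Real.sqrt 3 * c ^ 2 with hk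
  have hA : (0:ℝ) < 8 * Real.sqrt 3 * c ^ 2 := by positivity
  have hD : ∀ a b : ℝ, 0 < 2 + k * (a ^ 2 + b ^ 2) := by
    intro a b
    nlinarith [mul_nonneg hkpos.le (add_nonneg (sq_nonneg a) (sq_nonneg b))]
  have hlog : ∀ a b : ℝ, Real.log (ν a b) =
      Real.log (8 * Real.sqrt 3 * c ^ 2) - 2 * Real.log (2 + k * (a ^ 2 + b ^ 2)) := by
    intro a b
    have hDp := hD a b
    have : ν a b = (8 * Real.sqrt 3 * c ^ 2) / (2 + k * (a ^ 2 + b ^ 2)) ^ 2 := rfl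
    rw [this, Real.log_div hA.ne' (pow_ne_zero 2 hDp.ne'), Real.log_pow]
    push_cast; ring
  -- derivative of denominator
  have hDen : ∀ b s : ℝ, HasDerivAt (fun r : ℝ => 2 + k * (r ^ 2 + b ^ 2)) (2 * k * s) s := by
    intro b s
    have h := (((hasDerivAt_pow 2 s).add_const (b ^ 2)).const_mul k).const_add 2
    refine h.congr_deriv ?_
    push_cast; ring
  -- first derivative in the first slot
  have hd1 : ∀ b s : ℝ, HasDerivAt (fun r => Real.log (ν r b))
      (-(4 * k * s) / (2 + k * (s ^ 2 + b ^ 2))) s := by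
    intro b s
    have hlogd := (hDen b s).log (hD s b).ne'
    have h2 := (hlogd.const_mul 2).const_sub (Real.log (8 * Real.sqrt 3 * c ^ 2))
    have hfe : (fun r => Real.log (ν r b)) = fun r =>
        Real.log (8 * Real.sqrt 3 * c ^ 2) - 2 * Real.log (2 + k * (r ^ 2 + b ^ 2)) :=
      funext fun r => hlog r b
    rw [hfe]
    refine h2.congr_deriv ?_
    rw [← mul_div_assoc, ← neg_div]
    ring_nf
  -- second derivative in the first slot
  have hd2 : ∀ b s : ℝ, HasDerivAt (fun r => deriv (fun t => Real.log (ν t b)) r)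
      ((-(4 * k) * (2 + k * (s ^ 2 + b ^ 2)) - (-(4 * k * s)) * (2 * k * s)) /
        (2 + k * (s ^ 2 + b ^ 2)) ^ 2) s := by
    intro b s
    have hfe : (fun r => deriv (fun t => Real.log (ν t b)) r) =
        fun r => (-(4 * k * r)) / (2 + k * (r ^ 2 + b ^ 2)) :=
      funext fun r => (hd1 b r).deriv
    rw [hfe]
    have hnum : HasDerivAt (fun r : ℝ => -(4 * k * r)) (-(4 * k)) s := by
      exact (((hasDerivAt_id s).const_mul (4 * k)).neg).congr_deriv (by ring)
    exact hnum.div (hDen b s) (hD s b).ne'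
  -- symmetry: log (ν a b) is symmetric under swapping arguments
  have hsym : ∀ a b : ℝ, Real.log (ν a b) = Real.log (ν b a) := by
    intro a b; rw [hlog a b, hlog b a]; ring_nf
  -- assemble
  have hU : deriv (fun s => deriv (fun r => Real.log (ν r v)) s) u =
      (-(4 * k) * (2 + k * (u ^ 2 + v ^ 2)) - (-(4 * k * u)) * (2 * k * u)) /
        (2 + k * (u ^ 2 + v ^ 2)) ^ 2 := (hd2 v u).deriv
  have hV : deriv (fun s => deriv (fun r => Real.log (ν u r)) s) v =
      (-(4 * k) * (2 + k * (v ^ 2 + u ^ 2)) - (-(4 * k * v)) * (2 * k * v)) /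
        (2 + k * (v ^ 2 + u ^ 2)) ^ 2 := by
    have hfe : (fun s => deriv (fun r => Real.log (ν u r)) s) =
        fun s => deriv (fun r => Real.log (ν r u)) s := by
      funext s
      congr 1
      funext r
      exact (hsym u r).trans rfl
    rw [hfe]
    exact (hd2 u v).deriv
  have hνval : ν u v = 8 * k / (2 + k * (u ^ 2 + v ^ 2)) ^ 2 := by
    show 8 * Real.sqrt 3 * c ^ 2 / _ = _
    rw [hk]; ring_nf
  rw [show lap2 (fun a b => Real.log (ν a b)) u v =
      deriv (fun s => deriv (fun r => Real.log (ν r v)) s) u +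
      deriv (fun s => deriv (fun r => Real.log (ν u r)) s) v from rfl, hU, hV, hνval]
  have hDne := (hD u v).ne'
  have hDne' : (2 + k * (v ^ 2 + u ^ 2)) ≠ 0 := by
    rw [add_comm (v ^ 2)]; exact hDne
  field_simp
  ring
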